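/- Let k = f·f′ be an odd positive integer with 1 < f < k, and suppose there exist coprime integers x, y with x² − (k²+1)y² = f′². Then f′ is not a prime power, i.e., f′ is not of the form pᵐ for a prime p and positive integer m. -/

import Mathlib

/-- Descent lemma: a primitive solution of `x² - (k²+1)y² = c` with `|c| ≤ k`
forces `c = ±1`. -/
lemma descent_lemma (k : ℤ) (hk : 2 ≤ k) :
    ∀ n : ℕ, ∀ c x y : ℤ, |c| ≤ k → y.natAbs ≤ n → IsCoprime x y →
      x ^ 2 - (k ^ 2 + 1) * y ^ 2 = c → c = 1 ∨ c = -1 := by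
  intro n
  induction n with
  | zero =>
    intro c x y hc hy hcop heq
    have hy0 : y = 0 := by omega
    subst hy0
    have hux : IsUnit x := isCoprime_zero_right.mp hcop
    rcases Int.isUnit_iff.mp hux with h | h <;> subst h <;> left <;> linarith
  | succ n ih =>
    intro c x y hc hy hcop heq
    by_cases hy0 : y = 0
    · subst hy0
      have hux : IsUnit x := isCoprime_zero_right.mp hcop
      rcases Int.isUnit_iff.mp hux with h | h <;> subst h <;> left <;> linarith
    · -- pass to absolute values
      set a : ℤ := |x| with ha
      set b : ℤ := |y| with hb
      have ha0 : 0 ≤ a := abs_nonneg x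
      have hb1 : 1 ≤ b := by
        have : y.natAbs ≠ 0 := fun h => hy0 (Int.natAbs_eq_zero.mp h)
        rw [hb, Int.abs_eq_natAbs]; omega
      have hab : a ^ 2 - (k ^ 2 + 1) * b ^ 2 = c := by
        rw [ha, hb, sq_abs, sq_abs]; exact heq
      have hcop' : IsCoprime a b := by
        rcases abs_choice x with h | h <;> rcases abs_choice y with h' | h' <;>
          rw [ha, hb, h, h']
        · exact hcop
        · exact hcop.neg_right
        · exact hcop.neg_left
        · exact hcop.neg_left.neg_right
      have hc1 : -k ≤ c := (abs_le.mp hc).1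
      have hc2 : c ≤ k := (abs_le.mp hc).2
      -- a ≥ k*b
      have hakb : k * b ≤ a := by
        by_contra h
        push_neg at h
        have h1 : a + 1 ≤ k * b := h
        have h2 : 0 ≤ (k * b - 1 - a) * (k * b - 1 + a) :=
          mul_nonneg (by linarith) (by nlinarith)
        nlinarith [sq_nonneg b, mul_le_mul_of_nonneg_left hb1 (by linarith : (0:ℤ) ≤ k)]
      set y' : ℤ := a - k * b with hy'
      set x' : ℤ := k * a - (k ^ 2 + 1) * b with hx'
      have heq' : x' ^ 2 - (k ^ 2 + 1) * y' ^ 2 = -c := by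
        rw [hx', hy']; linear_combination -hab
      have hcop'' : IsCoprime x' y' := by
        obtain ⟨u, v, huv⟩ := hcop'
        refine ⟨-(u * k) - v, u * (k ^ 2 + 1) + v * k, ?_⟩
        rw [hx', hy']; linear_combination huv
      have hy'0 : 0 ≤ y' := by rw [hy']; linarith
      -- y' < b
      have hkey : y' * (a + k * b) = b ^ 2 + c := by
        rw [hy']; linear_combination hab
      have hpos : 0 < a + k * b := by nlinarith
      have hba : k * b * b ≤ a * b := mul_le_mul_of_nonneg_right hakb (by linarith)
      have hlt : y' * (a + k * b) < b * (a + k * b) := by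
        rw [hkey]; nlinarith [sq_nonneg (b - 1)]
      have hy'b : y' < b := lt_of_mul_lt_mul_right hlt (le_of_lt hpos)
      have hbound : y'.natAbs ≤ n := by
        have hbn : b = (y.natAbs : ℤ) := by rw [hb, Int.abs_eq_natAbs]
        omega
      have := ih (-c) x' y' (by rwa [abs_neg]) hbound hcop'' heq'
      omega

/-- Key step for the case `f < f'`: from a solution with `x - y = f'^2 * t`
we derive a contradiction. -/
lemma step_lemma (f f' x y t : ℤ) (hf1 : 1 < f) (hff' : f < f')
    (heq : x ^ 2 - ((f * f') ^ 2 + 1) * y ^ 2 = f' ^ 2)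
    (ht : x - y = f' ^ 2 * t) : False := by
  have hf'0 : f' ≠ 0 := by intro h; rw [h] at hff'; linarith
  have hA : x ^ 2 - y ^ 2 = f' ^ 2 * (f ^ 2 * y ^ 2 + 1) := by linear_combination heq
  have h1 : f' ^ 2 * (t * (f' ^ 2 * t + 2 * y)) = f' ^ 2 * (f ^ 2 * y ^ 2 + 1) := by
    linear_combination hA - (x + y + f' ^ 2 * t) * ht
  have hstar : t * (f' ^ 2 * t + 2 * y) = f ^ 2 * y ^ 2 + 1 :=
    mul_left_cancel₀ (pow_ne_zero 2 hf'0) h1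
  have hs : (f ^ 2 * y - t) ^ 2 - ((f * f') ^ 2 + 1) * t ^ 2 = -(f ^ 2) := by
    linear_combination (-(f ^ 2)) * hstar
  -- coprimality of (f^2*y - t, t)
  have hcop : IsCoprime (f ^ 2 * y - t) t := by
    rw [Int.isCoprime_iff_gcd_eq_one]
    set g : ℕ := Int.gcd (f ^ 2 * y - t) t with hg
    have hg1 : (g : ℤ) ∣ f ^ 2 * y - t := Int.gcd_dvd_left _ _
    have hg2 : (g : ℤ) ∣ t := Int.gcd_dvd_right _ _
    have hgf2 : (g : ℤ) ∣ f ^ 2 := by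
      have hid : f ^ 2 = ((f * f') ^ 2 + 1) * t ^ 2 - (f ^ 2 * y - t) ^ 2 := by
        linear_combination hs
      rw [hid]
      exact dvd_sub ((dvd_pow hg2 two_ne_zero).mul_left _) (dvd_pow hg1 two_ne_zero)
    have hgt : (g : ℤ) ∣ f ^ 2 * y ^ 2 + 1 :=
      hg2.trans ⟨f' ^ 2 * t + 2 * y, hstar.symm⟩
    have hone : (g : ℤ) ∣ 1 := by
      have : (g : ℤ) ∣ f ^ 2 * y ^ 2 := hgf2.mul_right _
      have h2 : (g : ℤ) ∣ (f ^ 2 * y ^ 2 + 1) - f ^ 2 * y ^ 2 := dvd_sub hgt this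
      simpa using h2
    have : g = 1 := by
      have := Int.eq_one_of_dvd_one (by positivity) hone
      exact_mod_cast this
    exact this
  have hk2 : 2 ≤ f * f' := by nlinarith
  have habs : |(-(f ^ 2))| ≤ f * f' := by
    rw [abs_neg, abs_of_nonneg (sq_nonneg f)]
    nlinarith
  have := descent_lemma (f * f') hk2 t.natAbs (-(f ^ 2)) (f ^ 2 * y - t) t habs
    le_rfl hcop hs
  rcases this with h | h <;> nlinarith [sq_nonneg f]

theorem stmt_2 (k f f' : ℤ) (hk : 0 < k) (hodd : Odd k) (hkff : k = f * f')
    (hf1 : 1 < f) (hfk : f < k) (x y : ℤ) (hxy : IsCoprime x y)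
    (heq : x ^ 2 - (k ^ 2 + 1) * y ^ 2 = f' ^ 2) :
    ¬ ∃ (p : ℕ) (m : ℕ), p.Prime ∧ 0 < m ∧ f' = (p : ℤ) ^ m := by
  rintro ⟨p, m, hp, hm, hfp⟩
  subst hkff
  have hf'0 : 0 < f' := by
    by_contra h
    push_neg at h
    nlinarith
  have hf'2 : (2 : ℤ) ≤ f' := by
    rw [hfp]
    have h2p : (2 : ℤ) ≤ (p : ℤ) := by exact_mod_cast hp.two_le
    calc (2 : ℤ) ≤ (p : ℤ) := h2p
    _ = (p : ℤ) ^ 1 := (pow_one _).symm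
    _ ≤ (p : ℤ) ^ m := pow_le_pow_right₀ (by linarith) hm
  rcases le_or_gt f' f with hle | hlt
  · -- case f' ≤ f : direct application of the descent lemma
    have hk2 : 2 ≤ f * f' := by nlinarith
    have habs : |f' ^ 2| ≤ f * f' := by
      rw [abs_of_nonneg (sq_nonneg f')]
      nlinarith
    have := descent_lemma (f * f') hk2 y.natAbs (f' ^ 2) x y habs le_rfl hxy heq
    rcases this with h | h <;> nlinarith
  · -- case f < f'
    have hoddf' : Odd f' := (Int.odd_mul.mp hodd).2
    have hpne2 : p ≠ 2 := by
      rintro rfl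
      have hdvd2 : (2 : ℤ) ∣ f' := by rw [hfp]; exact_mod_cast dvd_pow_self (2:ℤ) hm.ne'
      rcases hoddf' with ⟨j, hj⟩
      obtain ⟨c, hc⟩ := hdvd2
      omega
    have hpp : Prime (p : ℤ) := Nat.prime_iff_prime_int.mp hp
    have hAB : (x - y) * (x + y) = f' ^ 2 * (f ^ 2 * y ^ 2 + 1) := by linear_combination heq
    have hnb : ¬ ((p : ℤ) ∣ x - y ∧ (p : ℤ) ∣ x + y) := by
      rintro ⟨h1, h2⟩
      have hx2 : (p : ℤ) ∣ 2 * x := by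
        have := dvd_add h1 h2
        rwa [show x - y + (x + y) = 2 * x by ring] at this
      have hy2 : (p : ℤ) ∣ 2 * y := by
        have := dvd_sub h2 h1
        rwa [show x + y - (x - y) = 2 * y by ring] at this
      have hnd2 : ¬ (p : ℤ) ∣ 2 := by
        intro h
        have h' : p ∣ 2 := by exact_mod_cast h
        exact hpne2 ((Nat.prime_dvd_prime_iff_eq hp Nat.prime_two).mp h')
      have hx' : (p : ℤ) ∣ x := (hpp.dvd_mul.mp hx2).resolve_left hnd2
      have hy' : (p : ℤ) ∣ y := (hpp.dvd_mul.mp hy2).resolve_left hnd2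
      exact hpp.not_unit (hxy.isUnit_of_dvd' hx' hy')
    have hcopf : ∀ z : ℤ, ¬ (p : ℤ) ∣ z → IsCoprime (f' ^ 2) z := by
      intro z hz
      rw [hfp]
      exact ((hpp.coprime_iff_not_dvd.mpr hz).pow_left).pow_left
    have hprodf : f' ^ 2 ∣ (x - y) * (x + y) := ⟨_, hAB⟩
    have hdvd : f' ^ 2 ∣ x - y ∨ f' ^ 2 ∣ x + y := by
      by_cases hd : (p : ℤ) ∣ x + y
      · right
        have hnd : ¬ (p : ℤ) ∣ x - y := fun h => hnb ⟨h, hd⟩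
        exact (hcopf _ hnd).dvd_of_dvd_mul_right (by rwa [mul_comm] at hprodf)
      · left
        exact (hcopf _ hd).dvd_of_dvd_mul_right hprodf
    rcases hdvd with ⟨t, ht⟩ | ⟨t, ht⟩
    · exact step_lemma f f' x y t hf1 hlt heq ht
    · refine step_lemma f f' x (-y) t hf1 hlt ?_ ?_
      · linear_combination heq
      · linear_combination ht
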